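/- Let p be a prime, let χ be an irreducible complex character of a finite group G, and write c(χ) = p^a·m where p does not divide m. If n is a natural number not divisible by p such that ℚ_{p^f} ⊆ ℚ_{pn}(χ), then ℚ_{p^f} ⊆ ℚ_{pm}(χ). Moreover f ≤ a, except possibly when f = 1 and a = 0. -/

import Mathlib

open scoped Classical

noncomputable section

namespace PaperHZC

/-- The `n`-th cyclotomic field `ℚ_n = ℚ(e^{2πi/n})`, as a subfield of `ℂ`. -/
def cyclo (n : ℕ) : IntermediateField ℚ ℂ :=
  IntermediateField.adjoin ℚ {Complex.exp (2 * Real.pi * Complex.I / n)}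

/-- The field of values `ℚ(χ)` of a character `χ`. -/
def charField {G : Type} (χ : G → ℂ) : IntermediateField ℚ ℂ :=
  IntermediateField.adjoin ℚ (Set.range χ)

/-- `F(χ) = ⟨F, ℚ(χ)⟩`. -/
def fieldAdjChar (F : IntermediateField ℚ ℂ) {G : Type} (χ : G → ℂ) : IntermediateField ℚ ℂ :=
  F ⊔ charField χ

/-- The conductor `c(χ)` of a character: the least `n ≥ 1` with `ℚ(χ) ⊆ ℚ_n`. -/
def conductor {G : Type} (χ : G → ℂ) : ℕ :=
  sInf {n : ℕ | 0 < n ∧ charField χ ≤ cyclo n}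

/-- The conductor of an abelian number field: the least `n ≥ 1` with `F ⊆ ℚ_n`. -/
def fieldConductor (F : IntermediateField ℚ ℂ) : ℕ :=
  sInf {n : ℕ | 0 < n ∧ F ≤ cyclo n}

/-- `n_p`, the `p`-part of a natural number `n`. -/
def pPart (p n : ℕ) : ℕ := p ^ n.factorization p

/-- `n_{p'}`, the `p'`-part of a natural number `n`. -/
def pPartCo (p n : ℕ) : ℕ := n / pPart p n

/-- `χ : G → ℂ` is an irreducible (complex) character of `G`. -/
def IsIrrChar (G : Type) [Group G] (χ : G → ℂ) : Prop :=
  ∃ V : FDRep ℂ G, CategoryTheory.Simple V ∧ χ = V.character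

/-- `χ : G → ℂ` is a (complex) character of `G` (of some nonzero representation). -/
def IsChar (G : Type) [Group G] (χ : G → ℂ) : Prop :=
  ∃ V : FDRep ℂ G, χ = V.character ∧ χ 1 ≠ 0

/-- The usual inner product of class functions on a finite group. -/
def innerProd (G : Type) [Group G] [Finite G] (α β : G → ℂ) : ℂ :=
  (Nat.card G : ℂ)⁻¹ * ∑ᶠ g : G, α g * (starRingEnd ℂ) (β g)

/-- The size of the conjugacy class of `g`. -/
def classSize {G : Type} [Group G] (g : G) : ℕ := Nat.card {h : G // IsConj g h}

/-- The value `ω_χ(g) = |cl(g)|·χ(g)/χ(1)` of the central character attached to `χ`. -/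
def centralChar {G : Type} [Group G] (χ : G → ℂ) (g : G) : ℂ :=
  (classSize g : ℂ) * χ g / χ 1

/-- The ring of algebraic integers in `ℂ`. -/
abbrev AlgInt : Subalgebra ℤ ℂ := integralClosure ℤ ℂ

/-- A complex number lies in the ideal `M` of the algebraic integers. -/
def memI (M : Ideal AlgInt) (z : ℂ) : Prop := ∃ x ∈ M, (x : ℂ) = z

/-- `M` is a maximal ideal of the algebraic integers lying over the prime `p`. -/
def IsMaximalOver (p : ℕ) (M : Ideal AlgInt) : Prop := M.IsMaximal ∧ (p : AlgInt) ∈ M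

/-- Two irreducible characters lie in the same `p`-block: their central characters are
congruent modulo a maximal ideal of the algebraic integers over `p`. -/
def InSameBlock (p : ℕ) {G : Type} [Group G] [Finite G] (χ ψ : G → ℂ) : Prop :=
  ∃ M : Ideal AlgInt, IsMaximalOver p M ∧ ∀ g : G, memI M (centralChar χ g - centralChar ψ g)

/-- The order of a Sylow `p`-subgroup of the centralizer of `g`, i.e. of a defect group of
the conjugacy class of `g`. -/
def classDefectOrder (p : ℕ) {G : Type} [Group G] (g : G) : ℕ :=
  pPart p (Nat.card (Subgroup.centralizer ({g} : Set G)))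

/-- `D` is a defect group of the `p`-block of the irreducible character `χ`: by Brauer's
characterization, `D` is a Sylow `p`-subgroup of the centralizer of an element of a defect
class (a class on which the central character of the block does not vanish modulo `M`, of
minimal defect among such classes). -/
def IsDefectGroupOfChar (p : ℕ) {G : Type} [Group G] [Finite G] (χ : G → ℂ)
    (D : Subgroup G) : Prop :=
  ∃ M : Ideal AlgInt, IsMaximalOver p M ∧
    (∃ g : G, ¬ memI M (centralChar χ g) ∧ D ≤ Subgroup.centralizer ({g} : Set G) ∧
        Nat.card D = classDefectOrder p g) ∧
    ∀ h : G, ¬ memI M (centralChar χ h) → Nat.card D ≤ classDefectOrder p h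

/-- The degree `χ(1)` of a character, as a natural number. -/
def charDegree {G : Type} [Group G] (χ : G → ℂ) : ℕ := ⌊(χ 1).re⌋₊

/-- `χ` has `p`-height zero: `χ(1)_p = |G|_p / |D|` for a defect group `D` of its block. -/
def HasPHeightZero (p : ℕ) {G : Type} [Group G] [Finite G] (χ : G → ℂ) : Prop :=
  ∃ D : Subgroup G, IsDefectGroupOfChar p χ D ∧
    pPart p (charDegree χ) * Nat.card D = pPart p (Nat.card G)

/-- The `g`-conjugate `θ^g` of a character `θ` of a (normal) subgroup `N`. -/
def conjChar {G : Type} [Group G] {N : Subgroup G} (g : G) (θ : ↥N → ℂ) : ↥N → ℂ :=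
  fun n => if h : g * (n : G) * g⁻¹ ∈ N then θ ⟨g * (n : G) * g⁻¹, h⟩ else 0

/-- Restriction of a character of `H` to a smaller subgroup `K ≤ H`. -/
def res {G : Type} [Group G] {H K : Subgroup G} (h : K ≤ H) (χ : ↥H → ℂ) : ↥K → ℂ :=
  fun x => χ ⟨(x : G), h x.2⟩

/-- Restriction of a character of `G` to a subgroup `H`. -/
def resG {G : Type} [Group G] (H : Subgroup G) (χ : G → ℂ) : ↥H → ℂ := fun x => χ (x : G)

/-- `χ ∈ Irr(G)` lies over `θ ∈ Irr(N)`: `θ` is a constituent of `χ_N`. -/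
def LiesOver {G : Type} [Group G] [Finite G] (N : Subgroup G) (χ : G → ℂ)
    (θ : ↥N → ℂ) : Prop :=
  innerProd ↥N (resG N χ) θ ≠ 0

/-- The induced character `ψ^G` of a character `ψ` of a subgroup `H ≤ G`. -/
def inducedChar {G : Type} [Group G] [Finite G] (H : Subgroup G) (ψ : ↥H → ℂ) : G → ℂ :=
  fun g => (Nat.card H : ℂ)⁻¹ *
    ∑ᶠ x : G, if h : x * g * x⁻¹ ∈ H then ψ ⟨x * g * x⁻¹, h⟩ else 0

/-- An abelian number field: a finite Galois extension of `ℚ` inside `ℂ` with abelian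
Galois group. -/
def IsAbelianNumberField (F : IntermediateField ℚ ℂ) : Prop :=
  FiniteDimensional ℚ F ∧ IsGalois ℚ F ∧ ∀ σ τ : F ≃ₐ[ℚ] F, σ * τ = τ * σ



namespace Aux
set_option synthInstance.maxHeartbeats 1000000
set_option maxHeartbeats 1000000

noncomputable def zt (n : ℕ) : ℂ := Complex.exp (2 * Real.pi * Complex.I / n)

lemma hzt (n : ℕ) (hn : n ≠ 0) : IsPrimitiveRoot (zt n) n :=
  Complex.isPrimitiveRoot_exp n hn

lemma zt_mem (n : ℕ) : zt n ∈ cyclo n :=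
  IntermediateField.subset_adjoin ℚ _ (Set.mem_singleton _)

lemma cycloIsCyclotomic (n : ℕ+) : IsCyclotomicExtension {(n : ℕ)} ℚ (cyclo n) := by
  have hζ : IsPrimitiveRoot (zt n) (n : ℕ) := hzt n n.ne_zero
  have hint : IsIntegral ℚ (zt n) := (hζ.isIntegral n.pos).tower_top
  haveI := hζ.adjoin_isCyclotomicExtension ℚ
  exact IsCyclotomicExtension.equiv _ ℚ _
    (Subalgebra.equivOfEq _ _ (IntermediateField.adjoin_simple_toSubalgebra_of_isAlgebraic hint.isAlgebraic).symm)

lemma cycloFinite (n : ℕ+) : FiniteDimensional ℚ (cyclo n) := by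
  haveI := cycloIsCyclotomic n
  exact IsCyclotomicExtension.finiteDimensional {(n : ℕ)} ℚ (cyclo n)

lemma cycloGalois (n : ℕ+) : IsGalois ℚ (cyclo n) := by
  haveI := cycloIsCyclotomic n
  exact IsCyclotomicExtension.isGalois (S := {(n : ℕ)}) (K := ℚ) (L := cyclo n)

lemma cycloFinite' (n : ℕ) (hn : n ≠ 0) : FiniteDimensional ℚ (cyclo n) :=
  cycloFinite ⟨n, Nat.pos_of_ne_zero hn⟩

lemma cycloFinrank (n : ℕ+) : Module.finrank ℚ (cyclo n) = Nat.totient n := by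
  haveI := cycloIsCyclotomic n
  exact IsCyclotomicExtension.finrank (cyclo n) (Polynomial.cyclotomic.irreducible_rat n.pos)


lemma cycloFinrank' (n : ℕ) (hn : n ≠ 0) : Module.finrank ℚ (cyclo n) = Nat.totient n :=
  cycloFinrank ⟨n, Nat.pos_of_ne_zero hn⟩

def Fix (N : ℕ) (σ : cyclo N ≃ₐ[ℚ] cyclo N) : IntermediateField ℚ ℂ :=
  (IntermediateField.fixedField (Subgroup.zpowers σ)).map (cyclo N).val

lemma mem_Fix {N : ℕ} {σ : cyclo N ≃ₐ[ℚ] cyclo N} {z : ℂ} :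
    z ∈ Fix N σ ↔ ∃ hz : z ∈ cyclo N, σ ⟨z, hz⟩ = ⟨z, hz⟩ := by
  constructor
  · rintro ⟨y, hy, rfl⟩
    refine ⟨y.2, ?_⟩
    have := hy ⟨σ, Subgroup.mem_zpowers σ⟩
    simpa [AlgEquiv.smul_def] using this
  · rintro ⟨hz, hfix⟩
    refine ⟨⟨z, hz⟩, ?_, rfl⟩
    intro g
    have hst : σ ∈ MulAction.stabilizer (cyclo N ≃ₐ[ℚ] cyclo N) (⟨z, hz⟩ : cyclo N) := by
      rw [MulAction.mem_stabilizer_iff]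
      simpa [AlgEquiv.smul_def] using hfix
    have hle : Subgroup.zpowers σ ≤ MulAction.stabilizer (cyclo N ≃ₐ[ℚ] cyclo N) (⟨z, hz⟩ : cyclo N) :=
      (Subgroup.zpowers_le).2 hst
    exact hle g.2

lemma mem_Fix_mul {N : ℕ} {σ τ : cyclo N ≃ₐ[ℚ] cyclo N} {z : ℂ}
    (h1 : z ∈ Fix N σ) (h2 : z ∈ Fix N τ) : z ∈ Fix N (σ * τ) := by
  obtain ⟨hz, hσ⟩ := mem_Fix.1 h1
  obtain ⟨hz', hτ⟩ := mem_Fix.1 h2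
  refine mem_Fix.2 ⟨hz, ?_⟩
  have : τ ⟨z, hz⟩ = ⟨z, hz⟩ := hτ
  rw [AlgEquiv.mul_apply, this, hσ]

lemma le_of_fix (N : ℕ+) {E F : IntermediateField ℚ ℂ}
    (hE : E ≤ cyclo N) (hF : F ≤ cyclo N)
    (hfix : ∀ σ : cyclo (N : ℕ) ≃ₐ[ℚ] cyclo (N : ℕ), F ≤ Fix N σ → E ≤ Fix N σ) : E ≤ F := by
  haveI := cycloFinite N
  haveI := cycloGalois N
  set E' := E.comap (cyclo (N : ℕ)).val with hE'
  set F' := F.comap (cyclo (N : ℕ)).val with hF'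
  have key : E' ≤ IntermediateField.fixedField (IntermediateField.fixingSubgroup F') := by
    intro x hx
    intro g
    have hFfix : F ≤ Fix N g.1 := by
      intro w hw
      refine mem_Fix.2 ⟨hF hw, ?_⟩
      exact ((IntermediateField.mem_fixingSubgroup_iff F' g.1).1 g.2)
        ⟨w, hF hw⟩ hw
    have hEz := hfix g.1 hFfix hx
    obtain ⟨hz, hfix2⟩ := mem_Fix.1 hEz
    exact hfix2
  rw [IsGalois.fixedField_fixingSubgroup (K := F') (h := cycloGalois N)] at key
  intro z hz
  exact key (show (⟨z, hE hz⟩ : cyclo (N:ℕ)) ∈ E' from hz)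

instance (N : ℕ+) : NeZero (N : ℕ) := ⟨N.ne_zero⟩

noncomputable def ztK (N : ℕ+) : cyclo (N : ℕ) := ⟨zt N, zt_mem N⟩

lemma hztK (N : ℕ+) : IsPrimitiveRoot (ztK N) (N : ℕ) :=
  IsPrimitiveRoot.coe_submonoidClass_iff.mp (hzt N N.ne_zero)

noncomputable def sExp (N : ℕ+) (σ : cyclo (N:ℕ) ≃ₐ[ℚ] cyclo (N:ℕ)) : ℕ :=
  ((((hztK N).autToPow ℚ) σ : (ZMod (N:ℕ))ˣ) : ZMod (N:ℕ)).val

lemma sExp_spec (N : ℕ+) (σ : cyclo (N:ℕ) ≃ₐ[ℚ] cyclo (N:ℕ)) :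
    ztK N ^ sExp N σ = σ (ztK N) :=
  (hztK N).autToPow_spec ℚ σ

lemma sExp_coprime (N : ℕ+) (σ : cyclo (N:ℕ) ≃ₐ[ℚ] cyclo (N:ℕ)) :
    (sExp N σ).Coprime (N : ℕ) :=
  ZMod.val_coe_unit_coprime _

lemma ztK_pow_eq_pow_iff (N : ℕ+) (i j : ℕ) :
    ztK N ^ i = ztK N ^ j ↔ i ≡ j [MOD (N : ℕ)] := by
  have h := hztK N
  have h0 : ztK N ≠ 0 := h.ne_zero N.ne_zero
  constructor
  · intro hij
    have hdvd : (((N : ℕ)) : ℤ) ∣ (j : ℤ) - i := by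
      have hz : ztK N ^ ((j : ℤ) - i) = 1 := by
        rw [zpow_sub₀ h0, zpow_natCast, zpow_natCast, hij, div_self (pow_ne_zero _ h0)]
      exact (h.zpow_eq_one_iff_dvd _).mp hz
    exact (Nat.modEq_iff_dvd).mpr hdvd
  · intro hij
    have hdvd := (Nat.modEq_iff_dvd).mp hij
    have h1 : ztK N ^ ((j : ℤ) - i) = 1 := (h.zpow_eq_one_iff_dvd _).mpr hdvd
    rw [zpow_sub₀ h0, zpow_natCast, zpow_natCast,
      div_eq_one_iff_eq (pow_ne_zero _ h0)] at h1
    exact h1.symm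

lemma modeq_mul_div {d N : ℕ} (hd : d ∣ N) (hN : N ≠ 0) {i j : ℕ} :
    i * (N / d) ≡ j * (N / d) [MOD N] ↔ i ≡ j [MOD d] := by
  have hd0 : d ≠ 0 := by rintro rfl; exact hN (Nat.eq_zero_of_zero_dvd hd)
  have he0 : ((N / d : ℕ) : ℤ) ≠ 0 := by
    have : 0 < N / d :=
      Nat.div_pos (Nat.le_of_dvd (Nat.pos_of_ne_zero hN) hd) (Nat.pos_of_ne_zero hd0)
    exact_mod_cast this.ne'
  rw [Nat.modEq_iff_dvd, Nat.modEq_iff_dvd]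
  have hNe : (N : ℤ) = (d : ℤ) * ((N / d : ℕ) : ℤ) := by
    exact_mod_cast congrArg (fun t : ℕ => (t : ℤ)) (Nat.mul_div_cancel' hd).symm
  have h3 : ((j : ℤ) - i) * ((N / d : ℕ) : ℤ) = (↑(j * (N / d)) : ℤ) - ↑(i * (N / d)) := by
    push_cast; ring
  rw [hNe, ← h3]
  exact mul_dvd_mul_iff_right he0

lemma fix_pair_iff (N : ℕ+) (σ τ : cyclo (N:ℕ) ≃ₐ[ℚ] cyclo (N:ℕ)) {d : ℕ}
    (hd : d ∣ (N : ℕ)) (hd0 : d ≠ 0) :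
    σ (ztK N ^ ((N : ℕ) / d)) = τ (ztK N ^ ((N : ℕ) / d)) ↔
      sExp N σ ≡ sExp N τ [MOD d] := by
  rw [map_pow, map_pow, ← sExp_spec, ← sExp_spec, ← pow_mul, ← pow_mul,
    ztK_pow_eq_pow_iff, modeq_mul_div hd N.ne_zero]

lemma fix_one_iff (N : ℕ+) (σ : cyclo (N:ℕ) ≃ₐ[ℚ] cyclo (N:ℕ)) {d : ℕ}
    (hd : d ∣ (N : ℕ)) (hd0 : d ≠ 0) :
    σ (ztK N ^ ((N : ℕ) / d)) = ztK N ^ ((N : ℕ) / d) ↔ sExp N σ ≡ 1 [MOD d] := by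
  have key := fix_pair_iff N σ 1 hd hd0
  rw [AlgEquiv.one_apply] at key
  have hone : sExp N (1 : cyclo (N:ℕ) ≃ₐ[ℚ] cyclo (N:ℕ)) ≡ 1 [MOD d] := by
    refine Nat.ModEq.of_dvd hd ?_
    refine (ztK_pow_eq_pow_iff N _ 1).mp ?_
    rw [sExp_spec, AlgEquiv.one_apply, pow_one]
  rw [key]
  exact ⟨fun h => h.trans hone, fun h => h.trans hone.symm⟩

lemma cyclo_eq (n : ℕ) : cyclo n = IntermediateField.adjoin ℚ {zt n} := rfl

lemma zt_pow {d N : ℕ} (hd : d ∣ N) (hN : N ≠ 0) : zt N ^ (N / d) = zt d := by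
  have hd0 : d ≠ 0 := by rintro rfl; exact hN (Nat.eq_zero_of_zero_dvd hd)
  have hdc : (d : ℂ) ≠ 0 := Nat.cast_ne_zero.2 hd0
  have hNc : (N : ℂ) ≠ 0 := Nat.cast_ne_zero.2 hN
  rw [zt, zt, ← Complex.exp_nat_mul]
  congr 1
  rw [Nat.cast_div hd hdc]
  field_simp

lemma cyclo_le {d N : ℕ} (hd : d ∣ N) (hN : N ≠ 0) : cyclo d ≤ cyclo N := by
  rw [cyclo_eq, IntermediateField.adjoin_le_iff, Set.singleton_subset_iff,
    ← zt_pow hd hN]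
  exact pow_mem (zt_mem N) _

lemma cyclo_mul_le {a b : ℕ} (hab : Nat.Coprime a b) (ha : a ≠ 0) (hb : b ≠ 0) :
    cyclo (a * b) ≤ cyclo a ⊔ cyclo b := by
  rw [cyclo_eq, IntermediateField.adjoin_le_iff, Set.singleton_subset_iff]
  have hac : (a : ℂ) ≠ 0 := Nat.cast_ne_zero.2 ha
  have hbc : (b : ℂ) ≠ 0 := Nat.cast_ne_zero.2 hb
  have hbez : (a : ℤ) * Nat.gcdA a b + (b : ℤ) * Nat.gcdB a b = 1 := by
    have := Nat.gcd_eq_gcd_ab a b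
    rw [hab] at this
    exact_mod_cast this.symm
  have key : zt (a * b) = zt a ^ (Nat.gcdB a b) * zt b ^ (Nat.gcdA a b) := by
    rw [zt, zt, zt, ← Complex.exp_int_mul, ← Complex.exp_int_mul, ← Complex.exp_add]
    congr 1
    have hbez' : (a : ℂ) * (Nat.gcdA a b : ℂ) + (b : ℂ) * (Nat.gcdB a b : ℂ) = 1 := by
      exact_mod_cast congrArg (fun z : ℤ => (z : ℂ)) hbez
    push_cast
    field_simp
    linear_combination (-1 : ℂ) * hbez'
  rw [key]
  exact mul_mem
    (zpow_mem (SetLike.le_def.1 le_sup_left (zt_mem a)) _)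
    (zpow_mem (SetLike.le_def.1 le_sup_right (zt_mem b)) _)

lemma ztK_pow_div (N : ℕ+) {d : ℕ} (hd : d ∣ (N : ℕ)) :
    ((ztK N ^ ((N : ℕ) / d) : cyclo (N : ℕ)) : ℂ) = zt d := by
  push_cast [ztK]
  exact zt_pow hd N.ne_zero

lemma cyclo_le_Fix_iff (N : ℕ+) (σ : cyclo (N:ℕ) ≃ₐ[ℚ] cyclo (N:ℕ)) {d : ℕ}
    (hd : d ∣ (N : ℕ)) (hd0 : d ≠ 0) :
    cyclo d ≤ Fix (N : ℕ) σ ↔ σ (ztK N ^ ((N : ℕ) / d)) = ztK N ^ ((N : ℕ) / d) := by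
  have hmem : zt d ∈ cyclo (N : ℕ) := cyclo_le hd N.ne_zero (zt_mem d)
  have helt : (⟨zt d, hmem⟩ : cyclo (N : ℕ)) = ztK N ^ ((N : ℕ) / d) :=
    Subtype.ext (ztK_pow_div N hd).symm
  constructor
  · intro hle
    obtain ⟨hz1, hz2⟩ := mem_Fix.1 (hle (zt_mem d))
    have : (⟨zt d, hz1⟩ : cyclo (N : ℕ)) = ztK N ^ ((N : ℕ) / d) := helt
    rwa [this] at hz2
  · intro hfix
    rw [cyclo_eq, IntermediateField.adjoin_le_iff, Set.singleton_subset_iff]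
    refine mem_Fix.2 ⟨hmem, ?_⟩
    rw [helt]
    exact hfix

lemma cyclo_le_Fix_of_modEq (N : ℕ+) (σ : cyclo (N:ℕ) ≃ₐ[ℚ] cyclo (N:ℕ)) {d : ℕ}
    (hd : d ∣ (N : ℕ)) (hd0 : d ≠ 0) (hcong : sExp N σ ≡ 1 [MOD d]) :
    cyclo d ≤ Fix (N : ℕ) σ :=
  (cyclo_le_Fix_iff N σ hd hd0).2 ((fix_one_iff N σ hd hd0).2 hcong)

lemma cyclo_le_Fix_inv_mul (N : ℕ+) (σ τ : cyclo (N:ℕ) ≃ₐ[ℚ] cyclo (N:ℕ)) {d : ℕ}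
    (hd : d ∣ (N : ℕ)) (hd0 : d ≠ 0) (hcong : sExp N σ ≡ sExp N τ [MOD d]) :
    cyclo d ≤ Fix (N : ℕ) (σ⁻¹ * τ) := by
  refine (cyclo_le_Fix_iff N _ hd hd0).2 ?_
  have hpair := (fix_pair_iff N σ τ hd hd0).2 hcong
  refine σ.injective ?_
  rw [AlgEquiv.mul_apply]
  have h1 : σ (σ⁻¹ (τ (ztK N ^ ((N : ℕ) / d)))) = τ (ztK N ^ ((N : ℕ) / d)) := by
    rw [← AlgEquiv.mul_apply, mul_inv_cancel, AlgEquiv.one_apply]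
  rw [h1]
  exact hpair.symm

lemma exists_aut (N : ℕ+) (c : ℕ) (hc : c.Coprime (N : ℕ)) :
    ∃ σ : cyclo (N:ℕ) ≃ₐ[ℚ] cyclo (N:ℕ), sExp N σ ≡ c [MOD (N : ℕ)] := by
  haveI := cycloIsCyclotomic N
  have hirr : Irreducible (Polynomial.cyclotomic (N : ℕ) ℚ) :=
    Polynomial.cyclotomic.irreducible_rat N.pos
  have h2 : IsPrimitiveRoot (ztK N ^ c) (N : ℕ) := (hztK N).pow_of_coprime c hc
  haveI : NeZero (((N : ℕ) : ℕ) : ℚ) := ⟨Nat.cast_ne_zero.2 N.ne_zero⟩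
  have hmin : minpoly ℚ ((hztK N).powerBasis ℚ).gen = minpoly ℚ ((h2).powerBasis ℚ).gen := by
    rw [IsPrimitiveRoot.powerBasis_gen, IsPrimitiveRoot.powerBasis_gen,
      ← (hztK N).minpoly_eq_cyclotomic_of_irreducible hirr,
      ← h2.minpoly_eq_cyclotomic_of_irreducible hirr]
  refine ⟨((hztK N).powerBasis ℚ).equivOfMinpoly ((h2).powerBasis ℚ) hmin, ?_⟩
  have hgen := PowerBasis.equivOfMinpoly_gen ((hztK N).powerBasis ℚ) ((h2).powerBasis ℚ) hmin
  rw [IsPrimitiveRoot.powerBasis_gen, IsPrimitiveRoot.powerBasis_gen] at hgen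
  refine (ztK_pow_eq_pow_iff N _ _).1 ?_
  rw [sExp_spec, hgen]

lemma finrank_le_of_le {E F : IntermediateField ℚ ℂ} (hle : E ≤ F)
    [FiniteDimensional ℚ F] : Module.finrank ℚ E ≤ Module.finrank ℚ F :=
  LinearMap.finrank_le_finrank_of_injective
    (f := (IntermediateField.inclusion hle).toLinearMap)
    (IntermediateField.inclusion_injective hle)

lemma le_cyclo_mul {p f c m : ℕ} (hp : p.Prime) (hm : ¬ p ∣ m) (hm0 : m ≠ 0)
    (hc1 : 1 ≤ c) (hle : cyclo (p ^ f) ≤ cyclo (p ^ c * m)) : f ≤ c := by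
  by_contra hfc
  push_neg at hfc
  have hp0 : p ≠ 0 := hp.ne_zero
  have hcop : Nat.Coprime (p ^ f) m := (Nat.Coprime.pow_left _ ((hp.coprime_iff_not_dvd).2 hm))
  have hcop' : Nat.Coprime (p ^ c) m := (Nat.Coprime.pow_left _ ((hp.coprime_iff_not_dvd).2 hm))
  have hbig : cyclo (p ^ f * m) ≤ cyclo (p ^ c * m) := by
    refine (cyclo_mul_le hcop (pow_ne_zero _ hp0) hm0).trans ?_
    refine sup_le hle (cyclo_le ⟨p ^ c, by ring⟩ (by positivity))
  haveI : FiniteDimensional ℚ (cyclo (p ^ c * m)) :=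
    cycloFinite' _ (by positivity)
  have hrank := finrank_le_of_le (E := cyclo (p ^ f * m)) (F := cyclo (p ^ c * m)) hbig
  rw [cycloFinrank' _ (by positivity : (p : ℕ) ^ f * m ≠ 0),
    cycloFinrank' _ (by positivity : (p : ℕ) ^ c * m ≠ 0)] at hrank
  rw [Nat.totient_mul hcop, Nat.totient_mul hcop'] at hrank
  have htot : Nat.totient (p ^ f) ≤ Nat.totient (p ^ c) :=
    Nat.le_of_mul_le_mul_right hrank (Nat.totient_pos.2 (Nat.pos_of_ne_zero hm0))
  rw [Nat.totient_prime_pow hp (by omega : 0 < f), Nat.totient_prime_pow hp (by omega : 0 < c)] at htot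
  have hlt : p ^ (c - 1) * (p - 1) < p ^ (f - 1) * (p - 1) := by
    have : p ^ (c - 1) < p ^ (f - 1) :=
      Nat.pow_lt_pow_right hp.one_lt (by omega)
    have h2 : 0 < p - 1 := by have := hp.two_le; omega
    exact mul_lt_mul_of_pos_right this h2
  omega

lemma coprime_of_modEq {a b n : ℕ} (h : a ≡ b [MOD n]) (hb : b.Coprime n) : a.Coprime n := by
  have h1 : Nat.gcd n a = Nat.gcd n b := by
    rw [Nat.gcd_rec n a, Nat.gcd_rec n b]
    unfold Nat.ModEq at h
    rw [h]
  have : Nat.gcd a n = 1 := by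
    rw [Nat.gcd_comm a n, h1, Nat.gcd_comm n b]
    exact hb
  exact this


end Aux

/-- Lemma 2.1: if `c(χ) = p^a·m` with `p ∤ m`, `p ∤ n` and `ℚ_{p^f} ⊆ ℚ_{pn}(χ)`, then
`ℚ_{p^f} ⊆ ℚ_{pm}(χ)`; moreover `f ≤ a` unless possibly `f = 1` and `a = 0`. -/
theorem lemUseful (p : ℕ) (hp : p.Prime) {G : Type} [Group G] [Finite G]
    (χ : G → ℂ) (hχ : IsIrrChar G χ) (a m : ℕ) (hm : ¬ p ∣ m)
    (hc : conductor χ = p ^ a * m) (n : ℕ) (hn : ¬ p ∣ n) (f : ℕ)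
    (h : cyclo (p ^ f) ≤ fieldAdjChar (cyclo (p * n)) χ) :
    cyclo (p ^ f) ≤ fieldAdjChar (cyclo (p * m)) χ ∧ ((f = 1 ∧ a = 0) ∨ f ≤ a) := by
  classical
  have hp2 := hp.two_le
  have hm0 : m ≠ 0 := by rintro rfl; exact hm (dvd_zero p)
  have hn0 : n ≠ 0 := by rintro rfl; exact hn (dvd_zero p)
  have hp0 : p ≠ 0 := hp.ne_zero
  set b := max f (max a 1) with hbdef
  set L := Nat.lcm n m with hLdef
  have hL0 : L ≠ 0 := Nat.lcm_ne_zero hn0 hm0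
  have hpL : ¬ p ∣ L := by
    intro hdvd
    have hnm : p ∣ n * m := hdvd.trans (Nat.lcm_dvd_mul n m)
    rcases hp.dvd_mul.1 hnm with h' | h'
    · exact hn h'
    · exact hm h'
  have hcopbL : Nat.Coprime (p ^ b) L :=
    Nat.Coprime.pow_left _ ((hp.coprime_iff_not_dvd).2 hpL)
  have hN0 : p ^ b * L ≠ 0 := by positivity
  set NP : ℕ+ := ⟨p ^ b * L, Nat.pos_of_ne_zero hN0⟩ with hNPdef
  have hNn : (NP : ℕ) = p ^ b * L := rfl
  -- conductor facts
  have hSne : {k : ℕ | 0 < k ∧ charField χ ≤ cyclo k}.Nonempty := by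
    by_contra hemp
    rw [Set.not_nonempty_iff_eq_empty] at hemp
    have hzero : conductor χ = 0 := by rw [conductor, hemp, Nat.sInf_empty]
    rw [hc] at hzero
    rcases Nat.mul_eq_zero.1 hzero with h' | h'
    · exact pow_ne_zero a hp0 h'
    · exact hm0 h'
  have hCmem : conductor χ ∈ {k : ℕ | 0 < k ∧ charField χ ≤ cyclo k} :=
    Nat.sInf_mem hSne
  have hχc : charField χ ≤ cyclo (p ^ a * m) := by
    have := hCmem.2
    rwa [hc] at this
  have hb1 : 1 ≤ b := le_max_of_le_right (le_max_right a 1)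
  have hab : a ≤ b := le_max_of_le_right (le_max_left a 1)
  have hfb : f ≤ b := le_max_left _ _
  have hpdvd : p ∣ p ^ b := dvd_pow_self p (by omega)
  have hdvd_pm : p * m ∣ (NP : ℕ) := mul_dvd_mul hpdvd (Nat.dvd_lcm_right n m)
  have hdvd_pn : p * n ∣ (NP : ℕ) := mul_dvd_mul hpdvd (Nat.dvd_lcm_left n m)
  have hdvd_am : p ^ a * m ∣ (NP : ℕ) :=
    mul_dvd_mul (pow_dvd_pow p hab) (Nat.dvd_lcm_right n m)
  have hdvd_pf : p ^ f ∣ (NP : ℕ) := dvd_mul_of_dvd_left (pow_dvd_pow p hfb) L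
  have hpm0 : (p * m : ℕ) ≠ 0 := by positivity
  have hpn0 : (p * n : ℕ) ≠ 0 := by positivity
  have ham0 : (p ^ a * m : ℕ) ≠ 0 := by positivity
  have hpf0 : (p ^ f : ℕ) ≠ 0 := by positivity
  have main : cyclo (p ^ f) ≤ fieldAdjChar (cyclo (p * m)) χ := by
    rw [fieldAdjChar]
    refine Aux.le_of_fix NP (Aux.cyclo_le hdvd_pf hN0)
      (sup_le (Aux.cyclo_le hdvd_pm hN0) (hχc.trans (Aux.cyclo_le hdvd_am hN0))) ?_
    intro σ hFle
    have hpm_fix : cyclo (p * m) ≤ Aux.Fix (NP : ℕ) σ := le_sup_left.trans hFle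
    have hchar_fix : charField χ ≤ Aux.Fix (NP : ℕ) σ := le_sup_right.trans hFle
    have hs_pm : Aux.sExp NP σ ≡ 1 [MOD p * m] :=
      (Aux.fix_one_iff NP σ hdvd_pm hpm0).1 ((Aux.cyclo_le_Fix_iff NP σ hdvd_pm hpm0).1 hpm_fix)
    have hsco : (Aux.sExp NP σ).Coprime (NP : ℕ) := Aux.sExp_coprime NP σ
    obtain ⟨c, hc1, hc2⟩ := Nat.chineseRemainder hcopbL (Aux.sExp NP σ) 1
    have hccop : c.Coprime (NP : ℕ) := by
      have h1 : c.Coprime (p ^ b) :=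
        Aux.coprime_of_modEq hc1 (Nat.Coprime.coprime_dvd_right ⟨L, hNn⟩ hsco)
      have h2 : c.Coprime L := Aux.coprime_of_modEq hc2 (Nat.coprime_one_left L)
      exact Nat.Coprime.mul_right h1 h2
    obtain ⟨σ', hσ'⟩ := Aux.exists_aut NP c hccop
    have hs'_pb : Aux.sExp NP σ' ≡ Aux.sExp NP σ [MOD p ^ b] :=
      (Nat.ModEq.of_dvd (dvd_mul_right _ _) hσ').trans hc1
    have hs'_L : Aux.sExp NP σ' ≡ 1 [MOD L] :=
      (Nat.ModEq.of_dvd (dvd_mul_left _ _) hσ').trans hc2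
    have hs'_p : Aux.sExp NP σ' ≡ 1 [MOD p] :=
      (Nat.ModEq.of_dvd hpdvd hs'_pb).trans (Nat.ModEq.of_dvd (dvd_mul_right p m) hs_pm)
    have hs'_n : Aux.sExp NP σ' ≡ 1 [MOD n] :=
      Nat.ModEq.of_dvd (Nat.dvd_lcm_left n m) hs'_L
    have hcopn : Nat.Coprime p n := (hp.coprime_iff_not_dvd).2 hn
    have hs'_pn : Aux.sExp NP σ' ≡ 1 [MOD p * n] :=
      (Nat.modEq_and_modEq_iff_modEq_mul hcopn).1 ⟨hs'_p, hs'_n⟩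
    have hfix_pn : cyclo (p * n) ≤ Aux.Fix (NP : ℕ) σ' :=
      Aux.cyclo_le_Fix_of_modEq NP σ' hdvd_pn hpn0 hs'_pn
    have hs'_s_am : Aux.sExp NP σ ≡ Aux.sExp NP σ' [MOD p ^ a * m] := by
      have h1 : Aux.sExp NP σ' ≡ Aux.sExp NP σ [MOD p ^ a] :=
        Nat.ModEq.of_dvd (pow_dvd_pow p hab) hs'_pb
      have h2 : Aux.sExp NP σ' ≡ Aux.sExp NP σ [MOD m] :=
        (Nat.ModEq.of_dvd (Nat.dvd_lcm_right n m) hs'_L).trans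
          (Nat.ModEq.of_dvd (dvd_mul_left m p) hs_pm).symm
      have hcopam : Nat.Coprime (p ^ a) m :=
        Nat.Coprime.pow_left _ ((hp.coprime_iff_not_dvd).2 hm)
      exact ((Nat.modEq_and_modEq_iff_modEq_mul hcopam).1 ⟨h1, h2⟩).symm
    have hfix_char : charField χ ≤ Aux.Fix (NP : ℕ) σ' := by
      have hinv : cyclo (p ^ a * m) ≤ Aux.Fix (NP : ℕ) (σ⁻¹ * σ') :=
        Aux.cyclo_le_Fix_inv_mul NP σ σ' hdvd_am ham0 hs'_s_am
      intro z hz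
      have h1 := hchar_fix hz
      have h2 := (hχc.trans hinv) hz
      have h3 := Aux.mem_Fix_mul h1 h2
      rwa [mul_inv_cancel_left] at h3
    have hle_pf : cyclo (p ^ f) ≤ Aux.Fix (NP : ℕ) σ' := by
      refine h.trans ?_
      rw [fieldAdjChar]
      exact sup_le hfix_pn hfix_char
    have hs'_pf : Aux.sExp NP σ' ≡ 1 [MOD p ^ f] :=
      (Aux.fix_one_iff NP σ' hdvd_pf hpf0).1 ((Aux.cyclo_le_Fix_iff NP σ' hdvd_pf hpf0).1 hle_pf)
    have hs_pf : Aux.sExp NP σ ≡ 1 [MOD p ^ f] :=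
      ((Nat.ModEq.of_dvd (pow_dvd_pow p hfb) hs'_pb).symm).trans hs'_pf
    exact Aux.cyclo_le_Fix_of_modEq NP σ hdvd_pf hpf0 hs_pf
  refine ⟨main, ?_⟩
  by_cases hf1 : f ≤ 1
  · by_cases ha0 : a = 0
    · by_cases hf0 : f = 0
      · right; omega
      · left; exact ⟨by omega, ha0⟩
    · right; omega
  · right
    push_neg at hf1
    have hcm0 : (p ^ (max a 1) * m : ℕ) ≠ 0 := by positivity
    have h2 : cyclo (p ^ f) ≤ cyclo (p ^ (max a 1) * m) := by
      refine main.trans ?_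
      rw [fieldAdjChar]
      refine sup_le ?_ (hχc.trans ?_)
      · exact Aux.cyclo_le (mul_dvd_mul (dvd_pow_self p (by omega : max a 1 ≠ 0)) dvd_rfl) hcm0
      · exact Aux.cyclo_le (mul_dvd_mul (pow_dvd_pow p (le_max_left a 1)) dvd_rfl) hcm0
    have hfc := Aux.le_cyclo_mul hp hm hm0 (le_max_right a 1) h2
    rcases le_total a 1 with h' | h'
    · rw [max_eq_right h'] at hfc; omega
    · rw [max_eq_left h'] at hfc; omega

end PaperHZC
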